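/- arXiv:1811.11770 — 3 statements merged into one kernel-verified Lean document; each statement's English description precedes it below -/
import Mathlib

section
/- Björner's edge labelling of the partition lattice is an EL-labelling: in every interval [λ, ω] of the partition lattice of {1,...,n}, there is exactly one maximal chain whose sequence of edge labels is strictly increasing, where the edge obtained by merging two blocks A and B (with all other blocks unchanged) is labelled by max(min A, min B). -/
/-- The minimum of a block `A ⊆ Fin n`, regarded 1-based (elements of
`{1, …, n}`). -/
noncomputable def minOf {n : ℕ} (A : Set (Fin n)) : ℕ :=
  sInf ((fun x : Fin n => (x : ℕ) + 1) '' A)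

/-- Björner's label of the covering edge `l ⋖ m` in the partition lattice:
`m` is obtained from `l` by merging two blocks `A` and `B`, and the label is
`max (min A) (min B)`. -/
def IsBjLabel {n : ℕ} (l m : Setoid (Fin n)) (k : ℕ) : Prop :=
  ∃ A B : Set (Fin n), A ∈ l.classes ∧ B ∈ l.classes ∧ A ≠ B ∧
    m.classes = (l.classes \ {A, B}) ∪ {A ∪ B} ∧
    k = max (minOf A) (minOf B)

/-- A saturated (maximal) chain from `x` to `y`. -/
def IsSatChain {n : ℕ} (x y : Setoid (Fin n)) (c : List (Setoid (Fin n))) : Prop :=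
  c.Chain' (· ⋖ ·) ∧ c.head? = some x ∧ c.getLast? = some y

/-- `LabelSeq c ks` : `ks` is the sequence of Björner labels of the
consecutive edges of the chain `c`, read from bottom to top. -/
inductive LabelSeq {n : ℕ} : List (Setoid (Fin n)) → List ℕ → Prop
  | nil : LabelSeq [] []
  | single (x : Setoid (Fin n)) : LabelSeq [x] []
  | cons {x y : Setoid (Fin n)} {rest : List (Setoid (Fin n))} {k : ℕ} {ks : List ℕ} :
      IsBjLabel x y k → LabelSeq (y :: rest) ks → LabelSeq (x :: y :: rest) (k :: ks)

namespace BjAux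

variable {n : ℕ}

def classOf (l : Setoid (Fin n)) (a : Fin n) : Set (Fin n) := {x | l x a}

lemma classOf_mem (l : Setoid (Fin n)) (a : Fin n) : classOf l a ∈ l.classes := ⟨a, rfl⟩

lemma mem_classOf {l : Setoid (Fin n)} {x a : Fin n} : x ∈ classOf l a ↔ l x a := Iff.rfl

lemma classOf_eq_of_rel {l : Setoid (Fin n)} {a b : Fin n} (h : l a b) :
    classOf l a = classOf l b :=
  Set.ext fun x => ⟨fun hx => l.trans' hx h, fun hx => l.trans' hx (l.symm' h)⟩

lemma rel_of_classOf_eq {l : Setoid (Fin n)} {a b : Fin n} (h : classOf l a = classOf l b) :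
    l a b := by
  have : a ∈ classOf l b := h ▸ (l.refl' a : a ∈ classOf l a)
  exact this

def IsMinRep (l : Setoid (Fin n)) (x : Fin n) : Prop := ∀ y, l x y → (x : ℕ) ≤ (y : ℕ)

def Mins (l : Setoid (Fin n)) : Set ℕ := {k | ∃ x, IsMinRep l x ∧ k = (x : ℕ) + 1}

lemma minRep_unique {l : Setoid (Fin n)} {x y : Fin n} (hx : IsMinRep l x) (hy : IsMinRep l y)
    (h : l x y) : x = y :=
  Fin.ext (le_antisymm (hx y h) (hy x (l.symm' h)))

lemma minOf_spec (l : Setoid (Fin n)) (a : Fin n) :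
    ∃ m : Fin n, l m a ∧ IsMinRep l m ∧ minOf (classOf l a) = (m : ℕ) + 1 := by
  have hne : ((fun x : Fin n => (x : ℕ) + 1) '' classOf l a).Nonempty :=
    ⟨(a : ℕ) + 1, a, l.refl' a, rfl⟩
  obtain ⟨m, hm, hmeq⟩ := Nat.sInf_mem hne
  have hmeq' : (m : ℕ) + 1 = sInf ((fun x : Fin n => (x : ℕ) + 1) '' classOf l a) := hmeq
  refine ⟨m, hm, ?_, hmeq'.symm⟩
  intro y hy
  have hya : l y a := l.trans' (l.symm' hy) hm
  have hle : sInf ((fun x : Fin n => (x : ℕ) + 1) '' classOf l a) ≤ (y : ℕ) + 1 :=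
    Nat.sInf_le ⟨y, hya, rfl⟩
  omega

lemma minOf_eq_of_minRep {l : Setoid (Fin n)} {a : Fin n} (ha : IsMinRep l a) :
    minOf (classOf l a) = (a : ℕ) + 1 := by
  obtain ⟨m, hma, hmin, heq⟩ := minOf_spec l a
  have hma2 : m = a := minRep_unique hmin ha hma
  subst hma2
  exact heq

lemma mins_mono {l w : Setoid (Fin n)} (h : l ≤ w) : Mins w ⊆ Mins l := by
  rintro k ⟨x, hx, rfl⟩
  exact ⟨x, fun y hy => hx y (h hy), rfl⟩

lemma mins_subset (l : Setoid (Fin n)) : Mins l ⊆ Set.Icc 1 n := by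
  rintro k ⟨x, _, rfl⟩
  exact ⟨by omega, by have := x.isLt; omega⟩

lemma mins_finite (l : Setoid (Fin n)) : (Mins l).Finite :=
  (Set.finite_Icc 1 n).subset (mins_subset l)

def mergeSetoid (l : Setoid (Fin n)) (a b : Fin n) : Setoid (Fin n) where
  r x y := l x y ∨ ((l x a ∨ l x b) ∧ (l y a ∨ l y b))
  iseqv := by
    refine ⟨fun x => Or.inl (l.refl' x), ?_, ?_⟩
    · rintro x y (h | ⟨h1, h2⟩)
      · exact Or.inl (l.symm' h)
      · exact Or.inr ⟨h2, h1⟩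
    · rintro x y z (h | ⟨h1, h2⟩) (h' | ⟨h1', h2'⟩)
      · exact Or.inl (l.trans' h h')
      · exact Or.inr ⟨h1'.imp (l.trans' h) (l.trans' h), h2'⟩
      · exact Or.inr ⟨h1, h2.imp (l.trans' (l.symm' h')) (l.trans' (l.symm' h'))⟩
      · exact Or.inr ⟨h1, h2'⟩

lemma merge_rel_iff {l : Setoid (Fin n)} {a b x y : Fin n} :
    (mergeSetoid l a b) x y ↔ l x y ∨ ((l x a ∨ l x b) ∧ (l y a ∨ l y b)) := Iff.rfl

lemma le_merge (l : Setoid (Fin n)) (a b : Fin n) : l ≤ mergeSetoid l a b :=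
  fun _ _ h => Or.inl h

lemma merge_rel_ab (l : Setoid (Fin n)) (a b : Fin n) : (mergeSetoid l a b) a b :=
  Or.inr ⟨Or.inl (l.refl' a), Or.inr (l.refl' b)⟩

lemma merge_le {l s : Setoid (Fin n)} {a b : Fin n} (hs : l ≤ s) (hab : s a b) :
    mergeSetoid l a b ≤ s := by
  rintro x y (h | ⟨h1, h2⟩)
  · exact hs h
  · have hx : s x a := h1.elim (fun h => hs h) (fun h => s.trans' (hs h) (s.symm' hab))
    have hy : s y a := h2.elim (fun h => hs h) (fun h => s.trans' (hs h) (s.symm' hab))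
    exact s.trans' hx (s.symm' hy)

lemma lt_merge {l : Setoid (Fin n)} {a b : Fin n} (hab : ¬ l a b) : l < mergeSetoid l a b := by
  refine lt_of_le_of_ne (le_merge l a b) (fun h => hab ?_)
  have := merge_rel_ab l a b
  rw [← h] at this
  exact this

lemma covBy_merge {l : Setoid (Fin n)} {a b : Fin n} (hab : ¬ l a b) :
    l ⋖ mergeSetoid l a b := by
  refine ⟨lt_merge hab, fun s hls hsm => ?_⟩
  have hle : l ≤ s := hls.le
  have hxy : ∃ x y, s x y ∧ ¬ l x y := by
    by_contra h
    push_neg at h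
    exact absurd (le_antisymm (fun x y hx => h x y hx) hle) hls.ne'
  obtain ⟨x, y, hsxy, hlxy⟩ := hxy
  have hm : (mergeSetoid l a b) x y := hsm.le hsxy
  rcases hm with h | ⟨h1, h2⟩
  · exact hlxy h
  have hsab : s a b := by
    rcases h1 with h1 | h1 <;> rcases h2 with h2 | h2
    · exact absurd (l.trans' h1 (l.symm' h2)) hlxy
    · exact s.trans' (s.trans' (s.symm' (hle h1)) hsxy) (hle h2)
    · exact s.trans' (s.trans' (s.symm' (hle h2)) (s.symm' hsxy)) (hle h1)
    · exact absurd (l.trans' h1 (l.symm' h2)) hlxy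
  exact absurd hsm (not_lt_of_ge (merge_le hle hsab))

lemma merge_classes {l : Setoid (Fin n)} {a b : Fin n} (hab : ¬ l a b) :
    (mergeSetoid l a b).classes =
      (l.classes \ {classOf l a, classOf l b}) ∪ {classOf l a ∪ classOf l b} := by
  ext C
  constructor
  · rintro ⟨y, rfl⟩
    by_cases hy : l y a ∨ l y b
    · right
      have : {x | (mergeSetoid l a b) x y} = classOf l a ∪ classOf l b := by
        ext x
        simp only [Set.mem_setOf_eq, merge_rel_iff, Set.mem_union, mem_classOf]
        constructor
        · rintro (h | ⟨h1, _⟩)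
          · exact hy.imp (fun h' => l.trans' h h') (fun h' => l.trans' h h')
          · exact h1
        · intro h
          exact Or.inr ⟨h, hy⟩
      simp [this]
    · left
      push_neg at hy
      have hC : {x | (mergeSetoid l a b) x y} = classOf l y := by
        ext x
        simp only [Set.mem_setOf_eq, merge_rel_iff, mem_classOf]
        constructor
        · rintro (h | ⟨_, h2⟩)
          · exact h
          · exact absurd h2 (by simp [hy.1, hy.2])
        · exact Or.inl
      rw [hC]
      refine ⟨classOf_mem l y, ?_⟩
      simp only [Set.mem_insert_iff, Set.mem_singleton_iff]
      rintro (h | h)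
      · exact hy.1 (rel_of_classOf_eq h)
      · exact hy.2 (rel_of_classOf_eq h)
  · rintro (⟨⟨y, rfl⟩, hC⟩ | hC)
    · simp only [Set.mem_insert_iff, Set.mem_singleton_iff] at hC
      push_neg at hC
      have hy1 : ¬ l y a := fun h => hC.1 (classOf_eq_of_rel h)
      have hy2 : ¬ l y b := fun h => hC.2 (classOf_eq_of_rel h)
      refine ⟨y, ?_⟩
      ext x
      simp only [Set.mem_setOf_eq, merge_rel_iff]
      constructor
      · exact Or.inl
      · rintro (h | ⟨_, h2⟩)
        · exact h
        · rcases h2 with h2 | h2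
          · exact absurd h2 hy1
          · exact absurd h2 hy2
  -- remaining: C = A ∪ B
    · simp only [Set.mem_singleton_iff] at hC
      subst hC
      refine ⟨a, ?_⟩
      ext x
      simp only [Set.mem_union, mem_classOf, Set.mem_setOf_eq, merge_rel_iff]
      constructor
      · intro h
        exact Or.inr ⟨h, Or.inl (l.refl' a)⟩
      · rintro (h | ⟨h1, _⟩)
        · exact Or.inl h
        · exact h1

lemma isMinRep_merge_iff {l : Setoid (Fin n)} {a b : Fin n} (ha : IsMinRep l a)
    (hb : IsMinRep l b) (hlt : (a : ℕ) < (b : ℕ)) {x : Fin n} :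
    IsMinRep (mergeSetoid l a b) x ↔ IsMinRep l x ∧ x ≠ b := by
  constructor
  · intro h
    refine ⟨fun y hy => h y (Or.inl hy), ?_⟩
    rintro rfl
    have := h a (Or.inr ⟨Or.inr (l.refl' x), Or.inl (l.refl' a)⟩)
    omega
  · rintro ⟨hx, hxb⟩ y hy
    rcases hy with hy | ⟨h1, h2⟩
    · exact hx y hy
    rcases h1 with h1 | h1
    · have hxa : x = a := minRep_unique hx ha h1
      subst hxa
      rcases h2 with h2 | h2
      · exact ha y (l.symm' h2)
      · have := hb y (l.symm' h2)
        omega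
    · exact absurd (minRep_unique hx hb h1) hxb

lemma mins_merge {l : Setoid (Fin n)} {a b : Fin n} (ha : IsMinRep l a)
    (hb : IsMinRep l b) (hlt : (a : ℕ) < (b : ℕ)) :
    Mins (mergeSetoid l a b) = Mins l \ {(b : ℕ) + 1} := by
  ext k
  simp only [Mins, Set.mem_setOf_eq, Set.mem_diff, Set.mem_singleton_iff]
  constructor
  · rintro ⟨x, hx, rfl⟩
    rw [isMinRep_merge_iff ha hb hlt] at hx
    refine ⟨⟨x, hx.1, rfl⟩, ?_⟩
    have : x ≠ b := hx.2
    intro h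
    exact this (Fin.ext (by omega))
  · rintro ⟨⟨x, hx, rfl⟩, hne⟩
    refine ⟨x, (isMinRep_merge_iff ha hb hlt).2 ⟨hx, ?_⟩, rfl⟩
    rintro rfl
    exact hne rfl

/-- Structure of a Björner label: canonical representatives. -/
lemma bj_struct {l m : Setoid (Fin n)} {k : ℕ} (h : IsBjLabel l m k) :
    ∃ a b : Fin n, IsMinRep l a ∧ IsMinRep l b ∧ ¬ l a b ∧ (a : ℕ) < (b : ℕ) ∧
      k = (b : ℕ) + 1 ∧ m = mergeSetoid l a b := by
  obtain ⟨A, B, hA, hB, hAB, hcls, hk⟩ := h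
  obtain ⟨y, rfl⟩ := hA
  obtain ⟨z, rfl⟩ := hB
  obtain ⟨a, hay, hamin, haeq⟩ := minOf_spec l y
  obtain ⟨b, hbz, hbmin, hbeq⟩ := minOf_spec l z
  have hAy : ({x | l x y} : Set (Fin n)) = classOf l a := (classOf_eq_of_rel hay).symm
  have hBz : ({x | l x z} : Set (Fin n)) = classOf l b := (classOf_eq_of_rel hbz).symm
  rw [hAy, hBz] at hcls hAB hk
  rw [show classOf l y = classOf l a from hAy] at haeq
  rw [show classOf l z = classOf l b from hBz] at hbeq
  have hab : ¬ l a b := fun h => hAB (classOf_eq_of_rel h)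
  have hne : (a : ℕ) ≠ (b : ℕ) := fun h => hAB (by rw [Fin.ext h])
  rcases lt_or_gt_of_ne hne with hlt | hlt
  · refine ⟨a, b, hamin, hbmin, hab, hlt, ?_, ?_⟩
    · rw [hk, haeq, hbeq]; omega
    · rw [Setoid.classes_inj, merge_classes hab, hcls]
  · refine ⟨b, a, hbmin, hamin, fun h => hab (l.symm' h), hlt, ?_, ?_⟩
    · rw [hk, haeq, hbeq]; omega
    · rw [Setoid.classes_inj, merge_classes (fun h => hab (l.symm' h)), hcls,
        Set.pair_comm (classOf l a), Set.union_comm (classOf l a)]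

lemma bj_lt {l m : Setoid (Fin n)} {k : ℕ} (h : IsBjLabel l m k) : l < m := by
  obtain ⟨a, b, _, _, hab, _, _, rfl⟩ := bj_struct h
  exact lt_merge hab

lemma bj_mins {l m : Setoid (Fin n)} {k : ℕ} (h : IsBjLabel l m k) :
    k ∈ Mins l ∧ Mins m = Mins l \ {k} := by
  obtain ⟨a, b, ha, hb, hab, hlt, rfl, rfl⟩ := bj_struct h
  exact ⟨⟨b, hb, rfl⟩, mins_merge ha hb hlt⟩

/-- Construction of the label for an explicit merge. -/
lemma bj_of_merge {l : Setoid (Fin n)} {a b : Fin n} (ha : IsMinRep l a) (hb : IsMinRep l b)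
    (hab : ¬ l a b) (hlt : (a : ℕ) < (b : ℕ)) :
    IsBjLabel l (mergeSetoid l a b) ((b : ℕ) + 1) := by
  refine ⟨classOf l a, classOf l b, classOf_mem l a, classOf_mem l b,
    fun h => hab (rel_of_classOf_eq h), merge_classes hab, ?_⟩
  rw [minOf_eq_of_minRep ha, minOf_eq_of_minRep hb]
  omega

lemma chain'_le :
    ∀ (c : List (Setoid (Fin n))), ∀ x y : Setoid (Fin n), c.Chain' (· ⋖ ·) →
      c.head? = some x → c.getLast? = some y → x ≤ y := by
  intro c
  induction c with
  | nil => intro x y _ h; simp at h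
  | cons hd t ih =>
    intro x y hch hh hl
    cases t with
    | nil =>
      simp only [List.head?_cons, Option.some.injEq] at hh
      simp only [List.getLast?_singleton, Option.some.injEq] at hl
      subst hh; subst hl; exact le_refl _
    | cons b t' =>
      rw [List.Chain', List.isChain_cons_cons] at hch
      simp only [List.head?_cons, Option.some.injEq] at hh
      subst hh
      rw [List.getLast?_cons_cons] at hl
      exact le_trans hch.1.le (ih b y hch.2 rfl hl)

lemma labelSeq_mins_subset :
    ∀ {c : List (Setoid (Fin n))} {ks : List ℕ}, LabelSeq c ks →
      ∀ {x y : Setoid (Fin n)}, c.head? = some x → c.getLast? = some y → Mins y ⊆ Mins x := by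
  intro c ks h
  induction h with
  | nil => intro x y h; simp at h
  | single z =>
    intro x y hh hl
    simp only [List.head?_cons, Option.some.injEq] at hh
    simp only [List.getLast?_singleton, Option.some.injEq] at hl
    subst hh; subst hl; exact subset_rfl
  | @cons x' y' rest k' ks' hbj _ ih =>
    intro x y hh hl
    simp only [List.head?_cons, Option.some.injEq] at hh
    subst hh
    rw [List.getLast?_cons_cons] at hl
    refine subset_trans (ih rfl hl) ?_
    rw [(bj_mins hbj).2]
    exact Set.diff_subset

lemma labelSeq_label_mem :
    ∀ {c : List (Setoid (Fin n))} {ks : List ℕ}, LabelSeq c ks →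
      ∀ {x y : Setoid (Fin n)}, c.head? = some x → c.getLast? = some y →
        ∀ j ∈ ks, j ∈ Mins x ∧ j ∉ Mins y := by
  intro c ks h
  induction h with
  | nil => intro x y h; simp at h
  | single z => intro x y _ _ j hj; simp at hj
  | @cons x' y' rest k' ks' hbj hseq ih =>
    intro x y hh hl j hj
    simp only [List.head?_cons, Option.some.injEq] at hh
    subst hh
    rw [List.getLast?_cons_cons] at hl
    obtain ⟨hk1, hk2⟩ := bj_mins hbj
    rcases List.mem_cons.1 hj with rfl | hj
    · refine ⟨hk1, fun hmem => ?_⟩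
      have := labelSeq_mins_subset hseq rfl hl hmem
      rw [hk2] at this
      exact this.2 rfl
    · obtain ⟨h1, h2⟩ := ih rfl hl j hj
      refine ⟨?_, h2⟩
      rw [hk2] at h1
      exact h1.1

lemma labelSeq_mem_of_diff :
    ∀ {c : List (Setoid (Fin n))} {ks : List ℕ}, LabelSeq c ks →
      ∀ {x y : Setoid (Fin n)} {j : ℕ}, c.head? = some x → c.getLast? = some y →
        j ∈ Mins x → j ∉ Mins y → j ∈ ks := by
  intro c ks h
  induction h with
  | nil => intro x y j h; simp at h
  | single z =>
    intro x y j hh hl hj1 hj2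
    simp only [List.head?_cons, Option.some.injEq] at hh
    simp only [List.getLast?_singleton, Option.some.injEq] at hl
    subst hh; subst hl; exact absurd hj1 hj2
  | @cons x' y' rest k' ks' hbj hseq ih =>
    intro x y j hh hl hj1 hj2
    simp only [List.head?_cons, Option.some.injEq] at hh
    subst hh
    rw [List.getLast?_cons_cons] at hl
    by_cases hjk : j = k'
    · subst hjk; exact List.mem_cons_self
    · refine List.mem_cons_of_mem _ (ih rfl hl ?_ hj2)
      rw [(bj_mins hbj).2]
      exact ⟨hj1, hjk⟩

lemma eq_of_mins_subset {l w : Setoid (Fin n)} (hlw : l ≤ w) (h : Mins l ⊆ Mins w) :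
    l = w := by
  refine le_antisymm hlw ?_
  have key : ∀ a z, IsMinRep w a → w a z → l a z := by
    intro a z ha hz
    obtain ⟨m, hmz, hm, _⟩ := minOf_spec l z
    obtain ⟨m', hm', heq⟩ := h ⟨m, hm, rfl⟩
    have hm'm : m' = m := Fin.ext (by omega)
    subst m'
    have ham : w a m := w.trans' hz (w.symm' (hlw hmz))
    have ham2 : a = m := minRep_unique ha hm' ham
    rw [ham2]
    exact hmz
  intro x y hxy
  obtain ⟨a, hax, hamin, _⟩ := minOf_spec w x
  have hax' : l a x := key a x hamin hax
  have hay : l a y := key a y hamin (w.trans' hax hxy)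
  exact l.trans' (l.symm' hax') hay

lemma key_lemma : ∀ (N : ℕ) (l w : Setoid (Fin n)), l ≤ w →
    (Mins l \ Mins w).ncard = N →
    ∃! c : List (Setoid (Fin n)),
      IsSatChain l w c ∧ ∃ ks : List ℕ, LabelSeq c ks ∧ ks.Pairwise (· < ·) := by
  intro N
  induction N with
  | zero =>
    intro l w hlw hcard
    have hfin : (Mins l \ Mins w).Finite := (mins_finite l).diff
    have hempty : Mins l \ Mins w = ∅ := (Set.ncard_eq_zero hfin).1 hcard
    have hsub : Mins l ⊆ Mins w := Set.diff_eq_empty.1 hempty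
    have heq : l = w := eq_of_mins_subset hlw hsub
    subst w
    refine ⟨[l], ⟨⟨List.isChain_singleton l, rfl, rfl⟩, [], LabelSeq.single l,
      List.Pairwise.nil⟩, ?_⟩
    rintro c ⟨⟨hch, hh, hlst⟩, ks, hlseq, _⟩
    cases c with
    | nil => simp at hh
    | cons hd t =>
      simp only [List.head?_cons, Option.some.injEq] at hh
      subst hd
      cases t with
      | nil => rfl
      | cons x1 rest =>
        exfalso
        rw [List.Chain', List.isChain_cons_cons] at hch
        rw [List.getLast?_cons_cons] at hlst
        have hx1w : x1 ≤ l := chain'_le (x1 :: rest) x1 l hch.2 rfl hlst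
        exact absurd (lt_of_lt_of_le hch.1.lt hx1w) (lt_irrefl l)
  | succ N ih =>
    intro l w hlw hcard
    have hfinl : (Mins l).Finite := mins_finite l
    have hfinS : (Mins l \ Mins w).Finite := hfinl.diff
    have hSne : (Mins l \ Mins w).Nonempty := by
      rw [← Set.ncard_pos hfinS, hcard]; omega
    set S := Mins l \ Mins w with hS
    set k := sInf S with hkdef
    have hk : k ∈ S := Nat.sInf_mem hSne
    have hk1 : k ∈ Mins l := hk.1
    have hk2 : k ∉ Mins w := hk.2
    obtain ⟨b, hbminl, hkb⟩ := hk1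
    obtain ⟨a, haw, haminw, _⟩ := minOf_spec w b
    have haminl : IsMinRep l a := fun y hy => haminw y (hlw hy)
    have habne : a ≠ b := by
      rintro rfl
      exact hk2 ⟨a, haminw, hkb⟩
    have hnab : ¬ l a b := by
      intro h
      exact habne (minRep_unique haminl hbminl h)
    have hlt : (a : ℕ) < (b : ℕ) :=
      lt_of_le_of_ne (haminw b haw) (fun h => habne (Fin.ext h))
    set l' := mergeSetoid l a b with hl'def
    have hbj : IsBjLabel l l' k := by
      rw [hkb]; exact bj_of_merge haminl hbminl hnab hlt
    have hcov : l ⋖ l' := covBy_merge hnab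
    have hl'w : l' ≤ w := merge_le hlw haw
    have hminsl' : Mins l' = Mins l \ {k} := by
      rw [hkb]; exact mins_merge haminl hbminl hlt
    have hS' : Mins l' \ Mins w = S \ {k} := by
      rw [hminsl', hS, Set.diff_diff_comm]
    have hcard' : (Mins l' \ Mins w).ncard = N := by
      rw [hS', Set.ncard_diff_singleton_of_mem hk, hcard]
      omega
    obtain ⟨c', ⟨hsat', ks', hls', hsort'⟩, huniq'⟩ := ih l' w hl'w hcard'
    obtain ⟨hch', hh', hlst'⟩ := hsat'
    -- destructure c'
    cases c' with
    | nil => simp at hh'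
    | cons d t =>
    simp only [List.head?_cons, Option.some.injEq] at hh'
    subst d
    -- the candidate chain
    refine ⟨l :: l' :: t, ⟨⟨List.isChain_cons_cons.2 ⟨hcov, hch'⟩, rfl, by
        rw [List.getLast?_cons_cons]; exact hlst'⟩,
      k :: ks', LabelSeq.cons hbj hls', List.pairwise_cons.2 ⟨?_, hsort'⟩⟩, ?_⟩
    · -- k is smaller than every later label
      intro j hj
      obtain ⟨hj1, hj2⟩ := labelSeq_label_mem hls' rfl hlst' j hj
      rw [hminsl'] at hj1
      have hjS : j ∈ S := ⟨hj1.1, hj2⟩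
      exact lt_of_le_of_ne (Nat.sInf_le hjS) (fun h => hj1.2 h.symm)
    · -- uniqueness
      rintro c ⟨⟨hch, hh, hlst⟩, ks, hlseq, hsort⟩
      cases c with
      | nil => simp at hh
      | cons hd t0 =>
      simp only [List.head?_cons, Option.some.injEq] at hh
      subst hd
      cases t0 with
      | nil =>
        exfalso
        simp only [List.getLast?_singleton, Option.some.injEq] at hlst
        subst hlst
        exact hk2 ⟨b, hbminl, hkb⟩
      | cons x1 rest =>
      rw [List.Chain', List.isChain_cons_cons] at hch
      rw [List.getLast?_cons_cons] at hlst
      have hx1w : x1 ≤ w := chain'_le (x1 :: rest) x1 w hch.2 rfl hlst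
      cases hlseq with
      | cons hbj1 hseq1 =>
      rename_i k1 ks1
      rw [List.pairwise_cons] at hsort
      obtain ⟨hk1mem, hk1mins⟩ := bj_mins hbj1
      have hk1notw : k1 ∉ Mins w := by
        intro hmem
        have := mins_mono hx1w hmem
        rw [hk1mins] at this
        exact this.2 rfl
      have hkk1 : k ≤ k1 := Nat.sInf_le ⟨hk1mem, hk1notw⟩
      have hkmem : k ∈ k1 :: ks1 :=
        labelSeq_mem_of_diff (LabelSeq.cons hbj1 hseq1) rfl
          (by rw [List.getLast?_cons_cons]; exact hlst) hk.1 hk2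
      have hk1k : k1 = k := by
        rcases List.mem_cons.1 hkmem with h | h
        · exact h.symm
        · exact absurd (hsort.1 k h) (not_lt_of_ge hkk1)
      -- identify x1 with l'
      obtain ⟨a2, b2, ha2, hb2, hnab2, hlt2, hk1eq, hx1eq⟩ := bj_struct hbj1
      have hb2b : b2 = b := Fin.ext (by omega)
      subst b2
      have hwa2b : w a2 b := hx1w (hx1eq ▸ merge_rel_ab l a2 b)
      have ha2a : a2 = a := by
        by_contra hne
        have ha2S : (a2 : ℕ) + 1 ∈ S := by
          refine ⟨⟨a2, ha2, rfl⟩, ?_⟩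
          rintro ⟨m, hmw, heq⟩
          have hma2 : m = a2 := Fin.ext (by omega)
          subst m
          have hwa2a : w a2 a := w.trans' hwa2b (w.symm' haw)
          exact hne (minRep_unique hmw haminw hwa2a)
        have := Nat.sInf_le ha2S
        omega
      subst a2
      have hx1l' : x1 = l' := hx1eq
      subst x1
      have htail := huniq' (l' :: rest) ⟨⟨hch.2, rfl, hlst⟩, ks1, hseq1, hsort.2⟩
      rw [show (rest : List (Setoid (Fin n))) = t from by injection htail]

end BjAux

/-- Björner's edge labelling of the partition lattice is an EL-labelling:
every interval `[l, w]` contains exactly one maximal chain whose label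
sequence is strictly increasing. -/
theorem stmt2 (n : ℕ) (l w : Setoid (Fin n)) (hlw : l ≤ w) :
    ∃! c : List (Setoid (Fin n)),
      IsSatChain l w c ∧ ∃ ks : List ℕ, LabelSeq c ks ∧ ks.Pairwise (· < ·) :=
  BjAux.key_lemma _ l w hlw rfl
end

section
/- In Björner's EL-labelling of the partition lattice, the unique increasing maximal chain in the interval from the discrete partition of {1,...,n} to the full partition {1,...,n} is the chain obtained by successively merging, at each step, the two blocks with the smallest minimal elements; equivalently, it is the chain ({1},...,{n}) ⋖ ({1,2},{3},...,{n}) ⋖ ({1,2,3},{4},...,{n}) ⋖ ... ⋖ {1,...,n}. -/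
/-- The partition of `Fin n` whose only non-singleton block is
`{0, 1, …, k}` (i.e. `{1, …, k+1}` in 1-based terms). -/
def initSetoid (n k : ℕ) : Setoid (Fin n) where
  r x y := x = y ∨ ((x : ℕ) ≤ k ∧ (y : ℕ) ≤ k)
  iseqv := by
    constructor
    · intro x; exact Or.inl rfl
    · intro x y h
      rcases h with rfl | ⟨h1, h2⟩
      · exact Or.inl rfl
      · exact Or.inr ⟨h2, h1⟩
    · intro x y z h1 h2
      rcases h1 with rfl | ⟨a, b⟩
      · exact h2
      · rcases h2 with rfl | ⟨c, d⟩
        · exact Or.inr ⟨a, b⟩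
        · exact Or.inr ⟨a, d⟩


section BjAux

lemma sorted_eq_range'' : ∀ (l : List ℕ) (a : ℕ), l.Pairwise (· < ·) →
    (∀ k ∈ l, a ≤ k ∧ k < a + l.length) → l = List.range' a l.length := by
  intro l
  induction l with
  | nil => intro a _ _; rfl
  | cons h t ih =>
    intro a hs hb
    have hah : a ≤ h := (hb h (.head t)).1
    have hht : ∀ k ∈ t, h < k := fun k hk => (List.pairwise_cons.1 hs).1 k hk
    have ht : t = List.range' (h+1) t.length := by
      refine ih (h+1) (List.pairwise_cons.1 hs).2 fun k hk => ⟨hht k hk, ?_⟩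
      have := (hb k (.tail _ hk)).2
      simp only [List.length_cons] at this
      omega
    have hha : h = a := by
      rcases Nat.eq_zero_or_pos t.length with h0 | h0
      · have := (hb h (.head t)).2
        simp only [List.length_cons] at this; omega
      · have hx : h + t.length ∈ List.range' (h+1) t.length :=
          List.mem_range'_1.2 ⟨by omega, by omega⟩
        have hmem : h + t.length ∈ t := by
          conv_lhs => rw [ht]
          exact hx
        have := (hb _ (.tail _ hmem)).2
        simp only [List.length_cons] at this; omega
    subst hha
    simp only [List.length_cons]
    rw [List.range'_succ, ← ht]

lemma minOf_singleton {n : ℕ} (j : Fin n) : minOf {j} = (j : ℕ) + 1 := by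
  simp [minOf]

lemma minOf_le {n : ℕ} {A : Set (Fin n)} {a : Fin n} (h : a ∈ A) :
    minOf A ≤ (a : ℕ) + 1 :=
  Nat.sInf_le ⟨a, h, rfl⟩

lemma minOf_mem {n : ℕ} {A : Set (Fin n)} (h : A.Nonempty) :
    ∃ a ∈ A, minOf A = (a : ℕ) + 1 := by
  obtain ⟨a, ha, he⟩ := Nat.sInf_mem (h.image (fun x : Fin n => (x : ℕ) + 1))
  exact ⟨a, ha, he.symm⟩

lemma minOf_big {n : ℕ} (hn : 0 < n) (i : ℕ) :
    minOf {x : Fin n | (x : ℕ) ≤ i} = 1 := by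
  have h0 : (⟨0, hn⟩ : Fin n) ∈ {x : Fin n | (x : ℕ) ≤ i} := Nat.zero_le i
  have h1 : minOf {x : Fin n | (x : ℕ) ≤ i} ≤ 1 := minOf_le h0
  obtain ⟨a, _, ha⟩ := minOf_mem ⟨_, h0⟩
  omega

lemma nonempty_of_mem_classes' {α : Type*} {r : Setoid α} {s : Set α}
    (h : s ∈ r.classes) : s.Nonempty := by
  obtain ⟨y, rfl⟩ := h
  exact ⟨y, r.refl' y⟩

lemma bjLabel_bounds {n : ℕ} {l m : Setoid (Fin n)} {k : ℕ}
    (h : IsBjLabel l m k) : 2 ≤ k ∧ k ≤ n := by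
  obtain ⟨A, B, hA, hB, hAB, -, hk⟩ := h
  obtain ⟨a, haA, ha⟩ := minOf_mem (nonempty_of_mem_classes' hA)
  obtain ⟨b, hbB, hb⟩ := minOf_mem (nonempty_of_mem_classes' hB)
  have hab : a ≠ b := by
    rintro rfl
    exact hAB (Setoid.eq_of_mem_classes hA haA hB hbB)
  have h2 : 2 ≤ k := by
    rcases Nat.lt_or_ge k 2 with hlt | hge
    · exfalso
      have h1 : minOf A ≤ k := hk ▸ le_max_left _ _
      have h2' : minOf B ≤ k := hk ▸ le_max_right _ _
      have : (a : ℕ) = (b : ℕ) := by omega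
      exact hab (Fin.ext this)
    · exact hge
  refine ⟨h2, ?_⟩
  have h1 : (a : ℕ) < n := a.isLt
  have h2' : (b : ℕ) < n := b.isLt
  omega

lemma bjLabel_ncard {n : ℕ} {l m : Setoid (Fin n)} {k : ℕ}
    (h : IsBjLabel l m k) : l.classes.ncard = m.classes.ncard + 1 := by
  obtain ⟨A, B, hA, hB, hAB, hm, -⟩ := h
  obtain ⟨a, haA⟩ := nonempty_of_mem_classes' hA
  obtain ⟨b, hbB⟩ := nonempty_of_mem_classes' hB
  have hfin : l.classes.Finite := Set.toFinite _
  have hnotmem : A ∪ B ∉ l.classes \ {A, B} := by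
    rintro ⟨hC, hC2⟩
    have hAA : A = A ∪ B := Setoid.eq_of_mem_classes hA haA hC (Or.inl haA)
    have hBA : B = A ∪ B := Setoid.eq_of_mem_classes hB hbB hC (Or.inr hbB)
    exact hAB (hAA.trans hBA.symm)
  have hsub : {A, B} ⊆ l.classes := by
    rintro s (rfl | rfl) <;> assumption
  have hcard2 : ({A, B} : Set (Set (Fin n))).ncard = 2 := Set.ncard_pair hAB
  have h1 : m.classes.ncard = (l.classes \ {A, B}).ncard + 1 := by
    rw [hm, Set.union_singleton, Set.ncard_insert_of_notMem hnotmem hfin.diff]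
  have h2 : (l.classes \ {A, B}).ncard = l.classes.ncard - 2 := by
    rw [Set.ncard_diff hsub (Set.toFinite _), hcard2]
  have h3 : 2 ≤ l.classes.ncard := by
    calc 2 = ({A, B} : Set (Set (Fin n))).ncard := hcard2.symm
    _ ≤ l.classes.ncard := Set.ncard_le_ncard hsub hfin
  omega

lemma bot_classes_ncard {n : ℕ} : (⊥ : Setoid (Fin n)).classes.ncard = n := by
  have hbc : (⊥ : Setoid (Fin n)).classes = Set.range (fun x : Fin n => ({x} : Set (Fin n))) := by
    ext s
    constructor
    · rintro ⟨y, rfl⟩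
      refine ⟨y, ?_⟩
      ext x
      simp only [Set.mem_singleton_iff, Set.mem_setOf_eq]
      exact ⟨fun h => h ▸ rfl,
        fun h => show (⊥ : Setoid (Fin n)) x y from h ▸ (⊥ : Setoid (Fin n)).refl' x⟩
    · rintro ⟨y, rfl⟩
      refine ⟨y, ?_⟩
      ext x
      simp only [Set.mem_singleton_iff, Set.mem_setOf_eq]
      constructor
      · rintro rfl; exact (⊥ : Setoid (Fin n)).refl' x
      · intro h; exact h
  rw [hbc, ← Set.image_univ,
    Set.ncard_image_of_injective _ (fun x y h => Set.singleton_eq_singleton_iff.1 h),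
    Set.ncard_univ, Nat.card_eq_fintype_card, Fintype.card_fin]

lemma top_classes_ncard {n : ℕ} (hn : 0 < n) : (⊤ : Setoid (Fin n)).classes.ncard = 1 := by
  have htc : (⊤ : Setoid (Fin n)).classes = {Set.univ} := by
    ext s
    constructor
    · rintro ⟨y, rfl⟩
      simp only [Set.mem_singleton_iff]
      ext x
      simp only [Set.mem_setOf_eq, Set.mem_univ, iff_true]
      exact trivial
    · rintro rfl
      refine ⟨⟨0, hn⟩, ?_⟩
      ext x
      simp only [Set.mem_univ, Set.mem_setOf_eq, true_iff]
      exact trivial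
  rw [htc, Set.ncard_singleton]

lemma initSetoid_classes {n : ℕ} (hn : 0 < n) (i : ℕ) :
    (initSetoid n i).classes =
      insert {x : Fin n | (x : ℕ) ≤ i} {s | ∃ j : Fin n, i < (j : ℕ) ∧ s = {j}} := by
  ext s
  constructor
  · rintro ⟨y, rfl⟩
    by_cases hy : (y : ℕ) ≤ i
    · left
      ext x
      simp only [Set.mem_setOf_eq]
      constructor
      · rintro (rfl | ⟨h1, _⟩) <;> [exact hy; exact h1]
      · intro hx; exact Or.inr ⟨hx, hy⟩
    · right
      refine ⟨y, by omega, ?_⟩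
      ext x
      simp only [Set.mem_setOf_eq, Set.mem_singleton_iff]
      constructor
      · rintro (rfl | ⟨_, h2⟩) <;> [rfl; omega]
      · rintro rfl; exact Or.inl rfl
  · rintro (rfl | ⟨j, hj, rfl⟩)
    · refine ⟨⟨0, hn⟩, ?_⟩
      ext x
      simp only [Set.mem_setOf_eq]
      constructor
      · intro hx; exact Or.inr ⟨hx, Nat.zero_le i⟩
      · rintro (rfl | ⟨h1, _⟩) <;> simp_all
    · refine ⟨j, ?_⟩
      ext x
      simp only [Set.mem_singleton_iff, Set.mem_setOf_eq]
      constructor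
      · rintro rfl; exact Or.inl rfl
      · rintro (rfl | ⟨_, h2⟩) <;> [rfl; omega]

lemma bjLabel_swap {n : ℕ} {l m : Setoid (Fin n)} {k : ℕ}
    (h : IsBjLabel l m k) : ∃ A B : Set (Fin n), A ∈ l.classes ∧ B ∈ l.classes ∧ A ≠ B ∧
    m.classes = (l.classes \ {A, B}) ∪ {A ∪ B} ∧
    k = max (minOf A) (minOf B) ∧ minOf A ≤ minOf B := by
  obtain ⟨A, B, hA, hB, hAB, hm, hk⟩ := h
  rcases le_total (minOf A) (minOf B) with hle | hle
  · exact ⟨A, B, hA, hB, hAB, hm, hk, hle⟩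
  · refine ⟨B, A, hB, hA, hAB.symm, ?_, ?_, hle⟩
    · rw [Set.pair_comm B A, Set.union_comm B A]; exact hm
    · rw [max_comm]; exact hk

lemma step_lemma {n : ℕ} (i : ℕ) (hi : i + 1 < n) {y : Setoid (Fin n)}
    (h : IsBjLabel (initSetoid n i) y (i + 2)) : y = initSetoid n (i + 1) := by
  have hn : 0 < n := by omega
  obtain ⟨A, B, hA, hB, hAB, hm, hk, hord⟩ := bjLabel_swap h
  rw [initSetoid_classes hn i] at hA hB hm
  set L : Set (Fin n) := {x : Fin n | (x : ℕ) ≤ i} with hL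
  have hBsing : ∃ j : Fin n, i < (j : ℕ) ∧ B = {j} := by
    rcases hB with rfl | h'
    · exfalso
      rw [minOf_big hn] at hk hord
      omega
    · exact h'
  obtain ⟨j, hj, rfl⟩ := hBsing
  rw [minOf_singleton] at hk hord
  have hAL : A = L := by
    rcases hA with rfl | ⟨j', hj', rfl⟩
    · rfl
    · exfalso
      rw [minOf_singleton] at hk hord
      have hj'j : j' = j := Fin.ext (by omega)
      exact hAB (by rw [hj'j])
  subst hAL
  have hjval : (j : ℕ) = i + 1 := by
    rw [minOf_big hn] at hk; omega
  rw [Setoid.classes_inj]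
  rw [hm, initSetoid_classes hn (i + 1)]
  have hLj : L ∪ {j} = {x : Fin n | (x : ℕ) ≤ i + 1} := by
    ext x
    simp only [Set.mem_union, Set.mem_setOf_eq, Set.mem_singleton_iff, hL]
    constructor
    · rintro (hx | rfl) <;> omega
    · intro hx
      rcases Nat.lt_or_ge (x : ℕ) (i + 1) with h' | h'
      · left; omega
      · right; exact Fin.ext (by omega)
  have hdiff : insert L {s | ∃ j' : Fin n, i < (j' : ℕ) ∧ s = {j'}} \ {L, {j}} =
      {s | ∃ j' : Fin n, i + 1 < (j' : ℕ) ∧ s = {j'}} := by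
    ext s
    simp only [Set.mem_diff, Set.mem_insert_iff, Set.mem_setOf_eq, Set.mem_singleton_iff]
    constructor
    · rintro ⟨rfl | ⟨j', hj', rfl⟩, hs⟩
      · exact absurd (Or.inl rfl) hs
      · refine ⟨j', ?_, rfl⟩
        have hne : j' ≠ j := fun h' => hs (Or.inr (by rw [h']))
        have : (j' : ℕ) ≠ (j : ℕ) := fun h' => hne (Fin.ext h')
        omega
    · rintro ⟨j', hj', rfl⟩
      refine ⟨Or.inr ⟨j', by omega, rfl⟩, ?_⟩
      rintro (h' | h')
      · have : j' ∈ L := h' ▸ rfl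
        simp only [hL, Set.mem_setOf_eq] at this
        omega
      · have : j' = j := Set.singleton_eq_singleton_iff.1 h'
        subst this
        omega
  rw [hdiff, hLj, Set.union_singleton]

lemma labelSeq_ncard {n : ℕ} : ∀ {c : List (Setoid (Fin n))} {ks : List ℕ},
    LabelSeq c ks → ∀ {x y : Setoid (Fin n)}, c.head? = some x → c.getLast? = some y →
    x.classes.ncard = y.classes.ncard + ks.length := by
  intro c ks h
  induction h with
  | nil => intro x y hx _; simp at hx
  | single z => intro x y hx hy
                simp only [List.head?_cons, Option.some.injEq] at hx
                simp only [List.getLast?_singleton, Option.some.injEq] at hy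
                subst hx; subst hy; simp
  | @cons a b rest k ks hab _ ih =>
      intro x y hx hy
      simp only [List.head?_cons, Option.some.injEq] at hx
      subst hx
      have hy' : (b :: rest).getLast? = some y := by
        rw [List.getLast?_cons_cons] at hy
        exact hy
      have := ih rfl hy'
      have hcard := bjLabel_ncard hab
      simp only [List.length_cons]
      omega

lemma chain_lemma {n : ℕ} : ∀ (c : List (Setoid (Fin n))) (i : ℕ), i < n →
    c.head? = some (initSetoid n i) → LabelSeq c (List.range' (i + 2) (n - 1 - i)) →
    c = (List.range' i (n - i)).map (initSetoid n) := by
  intro c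
  induction c with
  | nil => intro i _ hx _; simp at hx
  | cons x rest ih =>
    intro i hi hx hls
    simp only [List.head?_cons, Option.some.injEq] at hx
    subst hx
    rcases Nat.eq_zero_or_pos (n - 1 - i) with h0 | h0
    · have hi' : i = n - 1 := by omega
      have hrest : rest = [] := by
        rw [h0] at hls
        cases hls with
        | single => rfl
      subst hrest
      have : n - i = 1 := by omega
      rw [this]
      rfl
    · obtain ⟨m, hm⟩ : ∃ m, n - 1 - i = m + 1 := ⟨n - 1 - i - 1, by omega⟩
      rw [hm, List.range'_succ] at hls
      cases hls with
      | cons hbj htail =>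
        rename_i y rest'
        have hy : y = initSetoid n (i + 1) := step_lemma i (by omega) hbj
        subst hy
        have hm' : n - 1 - (i + 1) = m := by omega
        have := ih (i + 1) (by omega) rfl (by rw [hm']; exact htail)
        have hni : n - i = (n - (i + 1)) + 1 := by omega
        rw [hni, List.range'_succ, List.map_cons, ← this]

end BjAux

/-- In Björner's EL-labelling of the partition lattice, the unique increasing
maximal chain from the discrete partition to the full one-block partition
is `({1},…,{n}) ⋖ ({1,2},{3},…,{n}) ⋖ ({1,2,3},{4},…,{n}) ⋖ ⋯ ⋖ {1,…,n}`,
obtained by successively merging the two blocks with smallest minima. -/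
theorem stmt3 (n : ℕ) (hn : 1 ≤ n) (c : List (Setoid (Fin n)))
    (hc : IsSatChain (⊥ : Setoid (Fin n)) ⊤ c)
    (hinc : ∃ ks : List ℕ, LabelSeq c ks ∧ ks.Pairwise (· < ·)) :
    c = (List.range n).map (initSetoid n) := by
  obtain ⟨hchain, hhead, hlast⟩ := hc
  obtain ⟨ks, hls, hsort⟩ := hinc
  have hn0 : 0 < n := hn
  -- length of ks
  have hlen : ks.length = n - 1 := by
    have := labelSeq_ncard hls hhead hlast
    rw [bot_classes_ncard, top_classes_ncard hn0] at this
    omega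
  -- ks = range' 2 (n-1)
  have hks : ks = List.range' 2 (n - 1) := by
    have hb : ∀ k ∈ ks, 2 ≤ k ∧ k < 2 + ks.length := by
      intro k hk
      have hmem : ∃ (l m : Setoid (Fin n)), IsBjLabel l m k := by
        clear hsort hlen hchain hhead hlast
        induction hls with
        | nil => simp at hk
        | single => simp at hk
        | cons hbj _ ih =>
          rcases List.mem_cons.1 hk with rfl | hk'
          · exact ⟨_, _, hbj⟩
          · exact ih hk'
      obtain ⟨l, m, hbj⟩ := hmem
      have := bjLabel_bounds hbj
      rw [hlen]
      omega
    have := sorted_eq_range'' ks 2 hsort hb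
    rw [hlen] at this
    exact this
  -- head is initSetoid n 0
  have hbot : (⊥ : Setoid (Fin n)) = initSetoid n 0 := by
    apply Setoid.ext
    intro a b
    show a = b ↔ _
    constructor
    · rintro rfl; exact Or.inl rfl
    · rintro (rfl | ⟨h1, h2⟩)
      · rfl
      · exact Fin.ext (by omega)
  rw [hbot] at hhead
  rw [hks] at hls
  have := chain_lemma c 0 hn0 hhead (by simpa using hls)
  simpa [List.range_eq_range'] using this
end

section
/- The labelling of the pointed partition poset sending the edge that merges blocks A_i and A_j (in a pointed partition with p blocks of {1,...,n}) to the pair (max(min A_i, min A_j), a + n - p) — where a is the minimum of the block whose pointed element is NOT chosen as the pointed element of A_i ∪ A_j — ordered lexicographically, is an EL-labelling of every maximal interval of the pointed partition poset: each such interval has a unique maximal chain with strictly increasing label sequence, and that sequence is lexicographically least. -/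
/-- A pointed partition of `Fin n`. -/
structure PtPartition (n : ℕ) where
  sd : Setoid (Fin n)
  pt : Fin n → Fin n
  pt_rel : ∀ x, sd.r (pt x) x
  pt_eq : ∀ x y, sd.r x y → pt x = pt y

def PtLE {n : ℕ} (a b : PtPartition n) : Prop :=
  a.sd ≤ b.sd ∧ ∀ x, a.pt (b.pt x) = b.pt x

def PtLT {n : ℕ} (a b : PtPartition n) : Prop := PtLE a b ∧ ¬ PtLE b a

def PtCovBy {n : ℕ} (a b : PtPartition n) : Prop :=
  PtLT a b ∧ ∀ c, PtLT a c → ¬ PtLT c b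

/-- The label `(max (min Aᵢ) (min Aⱼ), a + n - p)` of the edge merging the
blocks `A` and `B` of the pointed partition `l` (with `p` blocks): `a` is the
minimum of the block whose pointed element is NOT chosen as the pointed
element of `A ∪ B`. -/
noncomputable def IsPtLabel {n : ℕ} (l m : PtPartition n) (k : ℕ × ℕ) : Prop :=
  ∃ A B : Set (Fin n), A ∈ l.sd.classes ∧ B ∈ l.sd.classes ∧ A ≠ B ∧
    m.sd.classes = (l.sd.classes \ {A, B}) ∪ {A ∪ B} ∧
    (∀ x : Fin n, x ∉ A ∪ B → m.pt x = l.pt x) ∧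
    (((∀ x ∈ A ∪ B, ∀ a ∈ A, m.pt x = l.pt a) ∧
        k = (max (minOf A) (minOf B), minOf B + n - l.sd.classes.ncard)) ∨
      ((∀ x ∈ A ∪ B, ∀ b ∈ B, m.pt x = l.pt b) ∧
        k = (max (minOf A) (minOf B), minOf A + n - l.sd.classes.ncard)))

/-- A saturated chain from `x` to `y` in the pointed partition poset. -/
def PtSatChain {n : ℕ} (x y : PtPartition n) (c : List (PtPartition n)) : Prop :=
  c.Chain' PtCovBy ∧ c.head? = some x ∧ c.getLast? = some y

/-- Label sequence of a chain in the pointed partition poset. -/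
inductive PtLabelSeq {n : ℕ} : List (PtPartition n) → List (ℕ × ℕ) → Prop
  | nil : PtLabelSeq [] []
  | single (x : PtPartition n) : PtLabelSeq [x] []
  | cons {x y : PtPartition n} {rest : List (PtPartition n)} {k : ℕ × ℕ} {ks : List (ℕ × ℕ)} :
      IsPtLabel x y k → PtLabelSeq (y :: rest) ks → PtLabelSeq (x :: y :: rest) (k :: ks)

namespace Scratch
variable {n : ℕ}

theorem PtPartition.ext' {a b : PtPartition n} (h1 : a.sd = b.sd) (h2 : a.pt = b.pt) : a = b := by
  cases a; cases b; cases h1; cases h2; rfl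

theorem ptle_refl (a : PtPartition n) : PtLE a a :=
  ⟨le_refl _, fun x => a.pt_eq _ _ (a.pt_rel _)⟩

theorem ptle_trans {a b c : PtPartition n} (h1 : PtLE a b) (h2 : PtLE b c) : PtLE a c := by
  refine ⟨le_trans h1.1 h2.1, fun x => ?_⟩
  rw [← h2.2 x, h1.2, h2.2]

theorem ptlt_irrefl (a : PtPartition n) : ¬ PtLT a a := fun h => h.2 h.1

theorem chain_end_le : ∀ (c : List (PtPartition n)) (x w : PtPartition n),
    List.Chain' PtCovBy (x :: c) → (x :: c).getLast? = some w → PtLE x w := by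
  intro c
  induction c with
  | nil => intro x w _ h; simp at h; exact h ▸ ptle_refl x
  | cons y c ih =>
    intro x w hc hl
    simp only [List.Chain', List.isChain_cons_cons] at hc
    exact ptle_trans hc.1.1.1 (ih y w hc.2 (by simpa using hl))

theorem chain_self {c : List (PtPartition n)} {w : PtPartition n}
    (hc : List.Chain' PtCovBy c) (hh : c.head? = some w) (hl : c.getLast? = some w) :
    c = [w] := by
  match c with
  | [] => simp at hh
  | [x] => simp at hh; rw [hh]
  | x :: y :: r =>
    simp at hh
    subst hh
    simp only [List.Chain', List.isChain_cons_cons] at hc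
    have h1 : PtLE y x := chain_end_le r y x hc.2 (by simpa using hl)
    exact absurd h1 hc.1.1.2

def bigSd (n t : ℕ) : Setoid (Fin n) :=
  ⟨fun x y => x = y ∨ ((x : ℕ) ≤ t ∧ (y : ℕ) ≤ t),
   ⟨fun _ => Or.inl rfl, fun h => by tauto, fun h1 h2 => by
      rcases h1 with h1 | h1 <;> rcases h2 with h2 | h2 <;> subst_vars <;> tauto⟩⟩

theorem bigSd_rel {t : ℕ} {x y : Fin n} :
    (bigSd n t).r x y ↔ (x = y ∨ ((x : ℕ) ≤ t ∧ (y : ℕ) ≤ t)) := Iff.rfl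

noncomputable def Lp (M : Fin n) (t : ℕ) : PtPartition n where
  sd := bigSd n t
  pt x := if (x : ℕ) ≤ t then ⟨min t (M : ℕ), lt_of_le_of_lt (min_le_right _ _) M.isLt⟩ else x
  pt_rel x := by
    split
    · exact Or.inr ⟨min_le_left t _, ‹_›⟩
    · exact Or.inl rfl
  pt_eq x y h := by
    rcases h with h | h
    · rw [h]
    · rw [if_pos h.1, if_pos h.2]

theorem Lp_pt_le {M : Fin n} {t : ℕ} {x : Fin n} (h : (x : ℕ) ≤ t) :
    ((Lp M t).pt x : ℕ) = min t (M : ℕ) := by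
  simp only [Lp, if_pos h]

theorem Lp_pt_gt {M : Fin n} {t : ℕ} {x : Fin n} (h : t < (x : ℕ)) :
    (Lp M t).pt x = x := by
  simp only [Lp, if_neg (Nat.not_le.2 h)]


def big (n t : ℕ) : Set (Fin n) := {x | (x : ℕ) ≤ t}

theorem classes_Lp (hn : 0 < n) (t : ℕ) :
    (bigSd n t).classes =
      insert (big n t) ((fun u : Fin n => ({u} : Set (Fin n))) '' {u : Fin n | t < (u : ℕ)}) := by
  ext S
  simp only [Setoid.classes, Set.mem_setOf_eq, Set.mem_insert_iff, Set.mem_image]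
  constructor
  · rintro ⟨y, rfl⟩
    by_cases hy : (y : ℕ) ≤ t
    · left; ext x
      simp only [big, Set.mem_setOf_eq]
      constructor
      · rintro (rfl | h)
        · exact hy
        · exact h.1
      · intro h; exact Or.inr ⟨h, hy⟩
    · right; exact ⟨y, Nat.not_le.1 hy, by
        ext x
        simp only [Set.mem_singleton_iff, Set.mem_setOf_eq]
        constructor
        · rintro rfl; rfl
        · rintro (rfl | h)
          · rfl
          · exact absurd h.2 hy⟩
  · rintro (rfl | ⟨u, hu, rfl⟩)
    · exact ⟨⟨0, hn⟩, by
        ext x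
        simp only [big, Set.mem_setOf_eq]
        constructor
        · intro h; exact Or.inr ⟨h, Nat.zero_le t⟩
        · rintro (rfl | h)
          · exact Nat.zero_le t
          · exact h.1⟩
    · exact ⟨u, by
        ext x
        simp only [Set.mem_singleton_iff, Set.mem_setOf_eq]
        constructor
        · rintro rfl; exact Or.inl rfl
        · rintro (rfl | h)
          · rfl
          · exact absurd h.2 (Nat.not_le.2 hu)⟩

theorem minOf_big (hn : 0 < n) (t : ℕ) : minOf (big n t) = 1 := by
  have h1 : 1 ∈ (fun x : Fin n => (x : ℕ) + 1) '' big n t :=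
    ⟨⟨0, hn⟩, by simp only [big, Set.mem_setOf_eq]; exact Nat.zero_le t, by simp⟩
  refine le_antisymm (Nat.sInf_le h1) ?_
  rcases Nat.eq_zero_or_pos (sInf ((fun x : Fin n => (x : ℕ) + 1) '' big n t)) with h | h
  · rw [Nat.sInf_eq_zero] at h
    rcases h with h | h
    · obtain ⟨x, -, hx⟩ := h; simp at hx
    · rw [h] at h1; exact absurd h1 (Set.notMem_empty _)
  · exact h

theorem minOf_singleton (u : Fin n) : minOf ({u} : Set (Fin n)) = (u : ℕ) + 1 := by
  simp [minOf]

theorem card_filter_gt {t : ℕ} (ht : t < n) :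
    (Finset.univ.filter fun u : Fin n => t < (u : ℕ)).card = n - (t + 1) := by
  rw [← Nat.card_Ico (t+1) n]
  refine Finset.card_bij' (fun a _ => (a : ℕ)) (fun b hb => ⟨b, (Finset.mem_Ico.1 hb).2⟩) ?_ ?_ ?_ ?_
  · intro a ha
    simp only [Finset.mem_filter] at ha
    simp only [Finset.mem_Ico]
    omega
  · intro b hb
    simp only [Finset.mem_Ico] at hb
    simp only [Finset.mem_filter, Finset.mem_univ, true_and]
    omega
  · intro a ha; simp
  · intro b hb; simp

theorem ncard_classes (hn : 0 < n) {t : ℕ} (ht : t < n) :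
    (bigSd n t).classes.ncard = n - t := by
  rw [classes_Lp hn t]
  have hnm : big n t ∉ (fun u : Fin n => ({u} : Set (Fin n))) '' {u : Fin n | t < (u : ℕ)} := by
    rintro ⟨u, hu, he⟩
    have h0 : (⟨0, hn⟩ : Fin n) ∈ big n t := Nat.zero_le t
    rw [← he] at h0
    simp only [Set.mem_singleton_iff] at h0
    rw [← h0] at hu
    simp only [Set.mem_setOf_eq] at hu
    omega
  rw [Set.ncard_insert_of_notMem hnm (Set.toFinite _)]
  rw [Set.ncard_image_of_injective _ (fun a b h => by
    simpa using Set.singleton_eq_singleton_iff.1 h)]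
  have : {u : Fin n | t < (u : ℕ)}.ncard = n - (t + 1) := by
    rw [← card_filter_gt ht, ← Set.ncard_coe_finset]
    congr 1
    ext x; simp
  rw [this]; omega

theorem big_union_singleton {t : ℕ} (ht : t + 1 < n) :
    big n t ∪ {(⟨t+1, ht⟩ : Fin n)} = big n (t+1) := by
  ext x
  simp only [big, Set.mem_union, Set.mem_setOf_eq, Set.mem_singleton_iff, Fin.ext_iff]
  omega

theorem classes_step (hn : 0 < n) {t : ℕ} (ht : t + 1 < n) :
    ((bigSd n t).classes \ {big n t, {(⟨t+1, ht⟩ : Fin n)}}) ∪ {big n t ∪ {(⟨t+1, ht⟩ : Fin n)}}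
      = (bigSd n (t+1)).classes := by
  rw [classes_Lp hn t, classes_Lp hn (t+1), big_union_singleton ht]
  ext S
  simp only [Set.union_singleton, Set.mem_insert_iff, Set.mem_diff, Set.mem_image,
    Set.mem_setOf_eq, Set.mem_singleton_iff]
  constructor
  · rintro (rfl | ⟨(rfl | ⟨u, hu, rfl⟩), hne⟩)
    · exact Or.inl rfl
    · exact absurd (Or.inl rfl) hne
    · right
      refine ⟨u, ?_, rfl⟩
      rcases Nat.lt_or_ge (t+1) (u : ℕ) with h | h
      · exact h
      · exfalso
        apply hne
        right
        have : u = (⟨t+1, ht⟩ : Fin n) := Fin.ext (by simp only [Fin.val_mk]; omega)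
        rw [this]
  · rintro (rfl | ⟨u, hu, rfl⟩)
    · exact Or.inl rfl
    · right
      have hu' : t < (u : ℕ) := by omega
      refine ⟨Or.inr ⟨u, hu', rfl⟩, ?_⟩
      rintro (he | he)
      · have h0 : (⟨0, hn⟩ : Fin n) ∈ big n t := Nat.zero_le t
        rw [← he] at h0
        simp only [Set.mem_singleton_iff, Fin.ext_iff] at h0
        omega
      · rw [Set.singleton_eq_singleton_iff, Fin.ext_iff] at he
        try simp only [Fin.val_mk] at he
        omega


theorem lp_le_succ {M : Fin n} {t : ℕ} : PtLE (Lp M t) (Lp M (t+1)) := by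
  constructor
  · rw [Setoid.le_def]
    intro x y h
    rcases h with rfl | ⟨hx, hy⟩
    · exact Or.inl rfl
    · exact Or.inr ⟨by omega, by omega⟩
  · intro x
    by_cases hx : (x : ℕ) ≤ t + 1
    · have hv : ((Lp M (t+1)).pt x : ℕ) = min (t+1) (M : ℕ) := Lp_pt_le hx
      by_cases hM : (M : ℕ) ≤ t
      · have hv2 : ((Lp M (t+1)).pt x : ℕ) = (M : ℕ) := by omega
        apply Fin.ext
        rw [Lp_pt_le (by omega), hv2]
        omega
      · have hv2 : ((Lp M (t+1)).pt x : ℕ) = t + 1 := by omega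
        exact Lp_pt_gt (by omega)
    · rw [Lp_pt_gt (show (t:ℕ)+1 < (x:ℕ) by omega), Lp_pt_gt (show t < (x:ℕ) by omega)]

theorem lp_not_le_pred {M : Fin n} {t : ℕ} (ht : t + 1 < n) :
    ¬ PtLE (Lp M (t+1)) (Lp M t) := by
  rintro ⟨h, -⟩
  have := Setoid.le_def.1 h (x := ⟨0, by omega⟩) (y := ⟨t+1, ht⟩)
    (Or.inr ⟨by simp, by simp⟩)
  rcases this with he | ⟨-, h2⟩
  · rw [Fin.ext_iff] at he; simp at he
  · simp at h2

theorem lp_lt_succ {M : Fin n} {t : ℕ} (ht : t + 1 < n) :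
    PtLT (Lp M t) (Lp M (t+1)) := ⟨lp_le_succ, lp_not_le_pred ht⟩

theorem lp_covby {M : Fin n} {t : ℕ} (ht : t + 1 < n) : PtCovBy (Lp M t) (Lp M (t+1)) := by
  refine ⟨lp_lt_succ ht, ?_⟩
  rintro c ⟨hle1, hnle1⟩ ⟨hle2, hnle2⟩
  by_cases hrel : c.sd.r ⟨0, by omega⟩ ⟨t+1, ht⟩
  · -- show c = Lp M (t+1)
    have key : ∀ z : Fin n, (z : ℕ) ≤ t + 1 → c.sd.r z ⟨0, by omega⟩ := by
      intro z hz
      rcases Nat.lt_or_ge (z : ℕ) (t+1) with h | h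
      · exact Setoid.le_def.1 hle1.1 (Or.inr ⟨by omega, by simp⟩)
      · have : z = (⟨t+1, ht⟩ : Fin n) := Fin.ext (by simp; omega)
        rw [this]
        exact c.sd.symm' hrel
    have hsd : c.sd = bigSd n (t+1) := by
      apply Setoid.ext
      intro x y
      constructor
      · intro h; exact Setoid.le_def.1 hle2.1 h
      · intro h
        rcases h with rfl | ⟨hx, hy⟩
        · exact c.sd.refl' x
        · exact c.sd.trans' (key x hx) (c.sd.symm' (key y hy))
    have hpt : c.pt = (Lp M (t+1)).pt := by
      have hp0 : c.pt ((Lp M (t+1)).pt ⟨0, by omega⟩) = (Lp M (t+1)).pt ⟨0, by omega⟩ :=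
        hle2.2 _
      have hp0v : (((Lp M (t+1)).pt ⟨0, by omega⟩ : Fin n) : ℕ) = min (t+1) (M : ℕ) :=
        Lp_pt_le (by simp)
      funext x
      by_cases hx : (x : ℕ) ≤ t + 1
      · have h1 : c.sd.r x ((Lp M (t+1)).pt ⟨0, by omega⟩) := by
          rw [hsd]
          exact Or.inr ⟨hx, by omega⟩
        rw [c.pt_eq _ _ h1, hp0]
        apply Fin.ext
        rw [hp0v, Lp_pt_le hx]
      · have h2 := c.pt_rel x
        rw [hsd] at h2
        rcases h2 with he | ⟨-, hle⟩
        · rw [he, Lp_pt_gt (by omega)]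
        · omega
    have hc : c = Lp M (t+1) := PtPartition.ext' hsd hpt
    exact hnle2 (hc ▸ ptle_refl _)
  · -- show c = Lp M t
    have hsd : c.sd = bigSd n t := by
      apply Setoid.ext
      intro x y
      constructor
      · intro h
        have h2 := Setoid.le_def.1 hle2.1 h
        rcases h2 with rfl | ⟨hx, hy⟩
        · exact Or.inl rfl
        · by_cases hxy : x = y
          · exact Or.inl hxy
          · right
            constructor
            · rcases Nat.lt_or_ge (x : ℕ) (t+1) with h3 | h3
              · omega
              · exfalso
                have hx1 : x = (⟨t+1, ht⟩ : Fin n) := Fin.ext (by simp; omega)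
                have hy1 : (y : ℕ) ≤ t := by
                  rcases Nat.lt_or_ge (y : ℕ) (t+1) with h4 | h4
                  · omega
                  · exact absurd (Fin.ext (by omega) : x = y) hxy
                have : c.sd.r y ⟨0, by omega⟩ :=
                  Setoid.le_def.1 hle1.1 (Or.inr ⟨hy1, by simp⟩)
                exact hrel (c.sd.symm' (c.sd.trans' (hx1 ▸ h : c.sd.r ⟨t+1, ht⟩ y) this))
              -- y ≤ t analogous
            · rcases Nat.lt_or_ge (y : ℕ) (t+1) with h3 | h3
              · omega
              · exfalso
                have hy1 : y = (⟨t+1, ht⟩ : Fin n) := Fin.ext (by simp; omega)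
                have hx1 : (x : ℕ) ≤ t := by
                  rcases Nat.lt_or_ge (x : ℕ) (t+1) with h4 | h4
                  · omega
                  · exact absurd (Fin.ext (by omega) : x = y) hxy
                have : c.sd.r x ⟨0, by omega⟩ :=
                  Setoid.le_def.1 hle1.1 (Or.inr ⟨hx1, by simp⟩)
                exact hrel (c.sd.symm' (c.sd.trans' (hy1 ▸ c.sd.symm' h : c.sd.r ⟨t+1, ht⟩ x) this))
      · intro h; exact Setoid.le_def.1 hle1.1 h
    have hpt : c.pt = (Lp M t).pt := by
      have hq := hle1.2 ⟨0, by omega⟩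
      -- hq : (Lp M t).pt (c.pt ⟨0⟩) = c.pt ⟨0⟩
      have hq0 : c.sd.r (c.pt ⟨0, by omega⟩) ⟨0, by omega⟩ := c.pt_rel _
      rw [hsd] at hq0
      have hqle : ((c.pt ⟨0, by omega⟩ : Fin n) : ℕ) ≤ t := by
        rcases hq0 with he | ⟨h1, -⟩
        · rw [he]; simp
        · exact h1
      have hqv : ((c.pt ⟨0, by omega⟩ : Fin n) : ℕ) = min t (M : ℕ) := by
        have := Lp_pt_le hqle (M := M)
        rw [hq] at this
        omega
      funext x
      by_cases hx : (x : ℕ) ≤ t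
      · have h1 : c.sd.r x ⟨0, by omega⟩ := by
          rw [hsd]; exact Or.inr ⟨hx, by simp⟩
        rw [c.pt_eq _ _ h1]
        apply Fin.ext
        rw [hqv, Lp_pt_le hx]
      · have h2 := c.pt_rel x
        rw [hsd] at h2
        rcases h2 with he | ⟨-, hle⟩
        · rw [he, Lp_pt_gt (by omega)]
        · omega
    have hc : c = Lp M t := PtPartition.ext' hsd hpt
    exact hnle1 (hc ▸ ptle_refl _)


theorem Lp_sd {M : Fin n} {t : ℕ} : (Lp M t).sd = bigSd n t := rfl

noncomputable def lab (n : ℕ) (M : Fin n) (t : ℕ) : ℕ × ℕ :=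
  (t + 2, if t < (M : ℕ) then t + 1 else 2*t + 2)

theorem isLabel_canon {M : Fin n} {t : ℕ} (ht : t + 1 < n) :
    IsPtLabel (Lp M t) (Lp M (t+1)) (lab n M t) := by
  have hn : 0 < n := by omega
  have hmsing : ({(⟨t+1, ht⟩ : Fin n)} : Set (Fin n)) ∈ (Lp M t).sd.classes := by
    rw [Lp_sd, classes_Lp hn]
    right
    exact ⟨⟨t+1, ht⟩, by simp, rfl⟩
  have hmbig : big n t ∈ (Lp M t).sd.classes := by
    rw [Lp_sd, classes_Lp hn]; exact Set.mem_insert _ _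
  refine ⟨big n t, {⟨t+1, ht⟩}, hmbig, hmsing, ?_, ?_, ?_, ?_⟩
  · intro h
    have h0 : (⟨0, hn⟩ : Fin n) ∈ big n t := Nat.zero_le t
    rw [h] at h0
    simp only [Set.mem_singleton_iff, Fin.ext_iff] at h0
    simp at h0
  · rw [Lp_sd, Lp_sd, classes_step hn ht]
  · intro x hx
    simp only [Set.mem_union, big, Set.mem_setOf_eq, Set.mem_singleton_iff, Fin.ext_iff] at hx
    push_neg at hx
    try simp only [Fin.val_mk] at hx
    rw [Lp_pt_gt (show t+1 < (x:ℕ) by omega), Lp_pt_gt (show t < (x:ℕ) by omega)]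
  · have hc1 : minOf (big n t) = 1 := minOf_big hn t
    have hc2 : minOf ({(⟨t+1, ht⟩ : Fin n)} : Set (Fin n)) = t + 2 := by
      rw [minOf_singleton]
    have hc3 : (Lp M t).sd.classes.ncard = n - t := by
      rw [Lp_sd]; exact ncard_classes hn (by omega)
    by_cases hM : t < (M : ℕ)
    · right
      constructor
      · rintro x hx b hb
        simp only [Set.mem_singleton_iff] at hb
        subst hb
        simp only [Set.mem_union, big, Set.mem_setOf_eq, Set.mem_singleton_iff] at hx
        have hxle : (x : ℕ) ≤ t + 1 := by
          rcases hx with h | rfl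
          · omega
          · simp
        rw [Lp_pt_gt (show t < ((⟨t+1, ht⟩ : Fin n) : ℕ) by simp)]
        apply Fin.ext
        rw [Lp_pt_le hxle]
        simp
        omega
      · rw [hc1, hc2, hc3, lab, if_pos hM, Prod.mk.injEq]
        constructor <;> omega
    · left
      constructor
      · rintro x hx a ha
        simp only [big, Set.mem_setOf_eq] at ha
        simp only [Set.mem_union, big, Set.mem_setOf_eq, Set.mem_singleton_iff] at hx
        have hxle : (x : ℕ) ≤ t + 1 := by
          rcases hx with h | rfl
          · omega
          · simp
        apply Fin.ext
        rw [Lp_pt_le hxle, Lp_pt_le ha]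
        omega
      · rw [hc1, hc2, hc3, lab, if_neg hM, Prod.mk.injEq]
        constructor <;> omega

theorem y_ne_of_class {t : ℕ} (ht : t + 1 < n) {y : PtPartition n} {S : Set (Fin n)}
    (hmem : S ∈ y.sd.classes) (hS : S ≠ big n (t+1)) (hS2 : ∀ z : Fin n, t + 1 < (z : ℕ) → S ≠ {z})
    {M : Fin n} : y ≠ Lp M (t+1) := by
  have hn : 0 < n := by omega
  intro he
  rw [he, Lp_sd, classes_Lp hn] at hmem
  rcases hmem with h | ⟨z, hz, h⟩
  · exact hS h
  · exact hS2 z hz h.symm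

theorem Dcore {M : Fin n} {t : ℕ} (ht : t + 1 < n) {y : PtPartition n} {k : ℕ × ℕ}
    (u : Fin n) (hu : t < (u : ℕ))
    (hcls : y.sd.classes = ((bigSd n t).classes \ {big n t, {u}}) ∪ {big n t ∪ {u}})
    (hout : ∀ x : Fin n, x ∉ big n t ∪ {u} → y.pt x = (Lp M t).pt x)
    (hyM : y.pt M = M)
    (hdisj :
      ((∀ x ∈ big n t ∪ {u}, ((y.pt x : Fin n) : ℕ) = min t (M : ℕ)) ∧
          k = ((u : ℕ) + 1, (u : ℕ) + 1 + n - (n - t))) ∨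
      ((∀ x ∈ big n t ∪ {u}, y.pt x = u) ∧ k = ((u : ℕ) + 1, 1 + n - (n - t)))) :
    (k = lab n M t ∧ y = Lp M (t+1)) ∨
      (Prod.Lex (· < ·) (· < ·) (lab n M t) k ∧ y ≠ Lp M (t+1)) := by
  have hn : 0 < n := by omega
  have hmem : big n t ∪ {u} ∈ y.sd.classes := by
    rw [hcls]; right; rfl
  have htn : (u : ℕ) < n := u.isLt
  by_cases hu1 : t + 1 < (u : ℕ)
  · -- strict case by first coordinate
    have hne : y ≠ Lp M (t+1) := by
      refine y_ne_of_class ht hmem ?_ ?_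
      · intro h
        have : (⟨t+1, ht⟩ : Fin n) ∈ big n (t+1) := by
          simp only [big, Set.mem_setOf_eq]; simp
        rw [← h] at this
        simp only [Set.mem_union, big, Set.mem_setOf_eq, Set.mem_singleton_iff,
          Fin.ext_iff] at this
        try simp only [Fin.val_mk] at this
        omega
      · intro z hz h
        have : (⟨0, hn⟩ : Fin n) ∈ big n t ∪ {u} := Or.inl (Nat.zero_le t)
        rw [h] at this
        simp only [Set.mem_singleton_iff, Fin.ext_iff] at this
        try simp only [Fin.val_mk] at this
        omega
    have hk1 : k.1 = (u : ℕ) + 1 := by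
      rcases hdisj with ⟨-, rfl⟩ | ⟨-, rfl⟩ <;> rfl
    right
    refine ⟨?_, hne⟩
    have : lab n M t = (t + 2, (lab n M t).2) := rfl
    rw [this]
    have : k = (k.1, k.2) := rfl
    rw [this, hk1]
    exact Prod.Lex.left _ _ (by omega)
  · -- u = t+1
    have huv : (u : ℕ) = t + 1 := by omega
    have hueq : u = (⟨t+1, ht⟩ : Fin n) := Fin.ext (by simp [huv])
    have hsd : y.sd = bigSd n (t+1) := by
      rw [Setoid.classes_inj, hcls, hueq, classes_step hn ht]
    have hout' : ∀ x : Fin n, t + 1 < (x : ℕ) → y.pt x = x := by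
      intro x hx
      rw [hout x (by
        simp only [Set.mem_union, big, Set.mem_setOf_eq, Set.mem_singleton_iff, Fin.ext_iff]
        push_neg
        constructor
        · omega
        · omega), Lp_pt_gt (show t < (x:ℕ) by omega)]
    rcases hdisj with ⟨hpt, rfl⟩ | ⟨hpt, rfl⟩
    · -- point stays min t M
      by_cases hM : (M : ℕ) ≤ t
      · -- k = lab, y = Lp M (t+1)
        left
        constructor
        · simp only [lab, if_neg (by omega : ¬ t < (M : ℕ)), Prod.mk.injEq]
          constructor <;> omega
        · refine PtPartition.ext' hsd (funext fun x => ?_)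
          by_cases hx : (x : ℕ) ≤ t + 1
          · have hxm : x ∈ big n t ∪ {u} := by
              rcases Nat.lt_or_ge (x : ℕ) (t+1) with h | h
              · exact Or.inl (by simp only [big, Set.mem_setOf_eq]; omega)
              · exact Or.inr (by simp only [Set.mem_singleton_iff, Fin.ext_iff]; omega)
            apply Fin.ext
            rw [hpt x hxm, Lp_pt_le hx]
            omega
          · rw [hout' x (by omega), Lp_pt_gt (by omega)]
      · -- t < M : strict by second coordinate
        right
        constructor
        · have hk : ((u : ℕ) + 1, (u : ℕ) + 1 + n - (n - t)) = ((t:ℕ)+2, 2*t+2) := by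
            rw [Prod.mk.injEq]; constructor <;> omega
          have hl : lab n M t = (t+2, t+1) := by
            simp only [lab, if_pos (by omega : t < (M : ℕ))]
          rw [hk, hl]
          exact Prod.Lex.right _ (by omega)
        · intro he
          have h0 : (⟨0, hn⟩ : Fin n) ∈ big n t ∪ {u} := Or.inl (Nat.zero_le t)
          have hv := hpt _ h0
          rw [he, Lp_pt_le (by simp : ((⟨0, hn⟩ : Fin n) : ℕ) ≤ t + 1)] at hv
          omega
    · -- point moves to u
      have hM : t + 1 ≤ (M : ℕ) := by
        by_contra hM
        have hMm : M ∈ big n t ∪ {u} := Or.inl (by simp only [big, Set.mem_setOf_eq]; omega)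
        have := hpt M hMm
        rw [hyM] at this
        rw [this, huv] at hM
        omega
      left
      constructor
      · simp only [lab, if_pos (by omega : t < (M : ℕ)), Prod.mk.injEq]
        constructor <;> omega
      · refine PtPartition.ext' hsd (funext fun x => ?_)
        by_cases hx : (x : ℕ) ≤ t + 1
        · have hxm : x ∈ big n t ∪ {u} := by
            rcases Nat.lt_or_ge (x : ℕ) (t+1) with h | h
            · exact Or.inl (by simp only [big, Set.mem_setOf_eq]; omega)
            · exact Or.inr (by simp only [Set.mem_singleton_iff, Fin.ext_iff]; omega)
          apply Fin.ext
          rw [hpt x hxm, Lp_pt_le hx]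
          omega
        · rw [hout' x (by omega), Lp_pt_gt (by omega)]


theorem Dmain {M : Fin n} {t : ℕ} (ht : t + 1 < n) {y : PtPartition n} {k : ℕ × ℕ}
    (hl : IsPtLabel (Lp M t) y k) (hyM : y.pt M = M) :
    (k = lab n M t ∧ y = Lp M (t+1)) ∨
      (Prod.Lex (· < ·) (· < ·) (lab n M t) k ∧ y ≠ Lp M (t+1)) := by
  have hn : 0 < n := by omega
  obtain ⟨A, B, hA, hB, hAB, hcls, hout, hdisj⟩ := hl
  have hnc : (Lp M t).sd.classes.ncard = n - t := by
    rw [Lp_sd]; exact ncard_classes hn (by omega)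
  rw [hnc] at hdisj
  rw [Lp_sd, classes_Lp hn] at hA hB
  simp only [Set.mem_insert_iff, Set.mem_image, Set.mem_setOf_eq] at hA hB
  have h0big : (⟨0, hn⟩ : Fin n) ∈ big n t := Nat.zero_le t
  rcases hA with rfl | ⟨u, hu, rfl⟩
  · rcases hB with rfl | ⟨u, hu, rfl⟩
    · exact absurd rfl hAB
    · -- A = big, B = {u}
      refine Dcore ht u hu (by rwa [Lp_sd] at hcls) hout hyM ?_
      have hmax : max (minOf (big n t)) (minOf ({u} : Set (Fin n))) = (u : ℕ) + 1 := by
        rw [minOf_big hn, minOf_singleton]; omega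
      rcases hdisj with ⟨hpt, rfl⟩ | ⟨hpt, rfl⟩
      · left
        refine ⟨fun x hx => ?_, ?_⟩
        · rw [hpt x hx ⟨0, hn⟩ h0big, Lp_pt_le (by simp : ((⟨0, hn⟩ : Fin n) : ℕ) ≤ t)]
        · rw [hmax, minOf_singleton]
      · right
        refine ⟨fun x hx => ?_, ?_⟩
        · rw [hpt x hx u rfl, Lp_pt_gt hu]
        · rw [hmax, minOf_big hn]
  · rcases hB with rfl | ⟨v, hv, rfl⟩
    · -- A = {u}, B = big
      have hc2 : ({u} : Set (Fin n)) ∪ big n t = big n t ∪ {u} := Set.union_comm _ _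
      have hp2 : ({({u} : Set (Fin n)), big n t} : Set (Set (Fin n))) = {big n t, {u}} :=
        Set.pair_comm _ _
      rw [Lp_sd, hp2, hc2] at hcls
      refine Dcore ht u hu hcls (fun x hx => hout x (by rwa [Set.union_comm])) hyM ?_
      have hmax : max (minOf ({u} : Set (Fin n))) (minOf (big n t)) = (u : ℕ) + 1 := by
        rw [minOf_big hn, minOf_singleton]; omega
      rcases hdisj with ⟨hpt, rfl⟩ | ⟨hpt, rfl⟩
      · right
        refine ⟨fun x hx => ?_, ?_⟩
        · rw [hpt x (by rwa [Set.union_comm]) u rfl, Lp_pt_gt hu]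
        · rw [hmax, minOf_big hn]
      · left
        refine ⟨fun x hx => ?_, ?_⟩
        · rw [hpt x (by rwa [Set.union_comm]) ⟨0, hn⟩ h0big,
            Lp_pt_le (by simp : ((⟨0, hn⟩ : Fin n) : ℕ) ≤ t)]
        · rw [hmax, minOf_singleton]
    · -- A = {u}, B = {v}
      have huv : (u : ℕ) ≠ (v : ℕ) := by
        intro h
        exact hAB (by rw [Set.singleton_eq_singleton_iff]; exact Fin.ext h)
      have hmem : ({u} : Set (Fin n)) ∪ {v} ∈ y.sd.classes := by
        rw [hcls]; right; rfl
      have hne : y ≠ Lp M (t+1) := by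
        refine y_ne_of_class ht hmem ?_ ?_
        · intro h
          have h0 : (⟨0, hn⟩ : Fin n) ∈ big n (t+1) := Nat.zero_le (t+1)
          rw [← h] at h0
          simp only [Set.mem_union, Set.mem_singleton_iff, Fin.ext_iff] at h0
          try simp only [Fin.val_mk] at h0
          omega
        · intro z hz h
          have hu' : u ∈ ({u} : Set (Fin n)) ∪ {v} := Or.inl rfl
          have hv' : v ∈ ({u} : Set (Fin n)) ∪ {v} := Or.inr rfl
          rw [h] at hu' hv'
          simp only [Set.mem_singleton_iff] at hu' hv'
          exact huv (by rw [hu', hv'])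
      have hmax : max (minOf ({u} : Set (Fin n))) (minOf ({v} : Set (Fin n)))
          = max ((u : ℕ) + 1) ((v : ℕ) + 1) := by
        rw [minOf_singleton, minOf_singleton]
      have hlab : lab n M t = (t + 2, (lab n M t).2) := rfl
      rcases hdisj with ⟨-, rfl⟩ | ⟨-, rfl⟩
      · refine Or.inr ⟨?_, hne⟩
        rw [hmax, hlab]
        exact Prod.Lex.left _ _ (by omega)
      · refine Or.inr ⟨?_, hne⟩
        rw [hmax, hlab]
        exact Prod.Lex.left _ _ (by omega)


theorem Lp_pt_M {M : Fin n} {s : ℕ} : (Lp M s).pt M = M := by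
  by_cases h : (M : ℕ) ≤ s
  · exact Fin.ext (by rw [Lp_pt_le h]; omega)
  · exact Lp_pt_gt (by omega)

noncomputable def canonChain (M : Fin n) (t : ℕ) : List (PtPartition n) :=
  (List.range' t (n - t)).map (Lp M)

noncomputable def canonLabels (M : Fin n) (t : ℕ) : List (ℕ × ℕ) :=
  (List.range' t (n - 1 - t)).map (lab n M)

theorem canonChain_cons {M : Fin n} {t : ℕ} (ht : t + 1 < n) :
    canonChain M t = Lp M t :: canonChain M (t+1) := by
  unfold canonChain
  have h : n - t = (n - (t+1)) + 1 := by omega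
  rw [h, List.range'_succ, List.map_cons]

theorem canonChain_last {M : Fin n} (hn : 0 < n) :
    canonChain M (n-1) = [Lp M (n-1)] := by
  unfold canonChain
  have h : n - (n-1) = 1 := by omega
  rw [h]
  rfl

theorem canonLabels_cons {M : Fin n} {t : ℕ} (ht : t + 1 < n) :
    canonLabels M t = lab n M t :: canonLabels M (t+1) := by
  unfold canonLabels
  have h : n - 1 - t = (n - 1 - (t+1)) + 1 := by omega
  rw [h, List.range'_succ, List.map_cons]

theorem canonLabels_last {M : Fin n} : canonLabels M (n-1) = [] := by
  unfold canonLabels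
  have h : n - 1 - (n-1) = 0 := by omega
  rw [h]
  rfl

theorem canon_facts {M : Fin n} : ∀ (d t : ℕ), t < n → n - 1 - t = d →
    (canonChain M t).Chain' PtCovBy ∧
    (canonChain M t).head? = some (Lp M t) ∧
    (canonChain M t).getLast? = some (Lp M (n-1)) ∧
    PtLabelSeq (canonChain M t) (canonLabels M t) := by
  intro d
  induction d with
  | zero =>
    intro t ht hd
    have : t = n - 1 := by omega
    subst this
    rw [canonChain_last (by omega), canonLabels_last]
    exact ⟨List.isChain_singleton _, rfl, rfl, PtLabelSeq.single _⟩
  | succ d ih =>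
    intro t ht hd
    have ht1 : t + 1 < n := by omega
    obtain ⟨hch, hhd, hlast, hseq⟩ := ih (t+1) (by omega) (by omega)
    rw [canonChain_cons ht1, canonLabels_cons ht1]
    obtain ⟨rest, hrest⟩ : ∃ rest, canonChain M (t+1) = Lp M (t+1) :: rest := by
      cases h : canonChain M (t+1) with
      | nil => rw [h] at hhd; simp at hhd
      | cons a r => rw [h] at hhd; simp at hhd; exact ⟨r, by rw [hhd]⟩
    refine ⟨?_, rfl, ?_, ?_⟩
    · rw [hrest]; simp only [List.Chain', List.isChain_cons_cons]
      exact ⟨lp_covby ht1, hrest ▸ hch⟩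
    · rw [List.getLast?_cons, ← hlast]
      cases h : canonChain M (t+1) with
      | nil => rw [h] at hhd; simp at hhd
      | cons a r => simp [List.getLast?_cons]
    · rw [hrest]
      exact PtLabelSeq.cons (isLabel_canon ht1) (hrest ▸ hseq)

theorem labelseq_canon_unique {M : Fin n} :
    ∀ (d t : ℕ) (ks : List (ℕ × ℕ)), t < n → n - 1 - t = d →
      PtLabelSeq (canonChain M t) ks → ks = canonLabels M t := by
  intro d
  induction d with
  | zero =>
    intro t ks ht hd hseq
    have : t = n - 1 := by omega
    subst this
    rw [canonChain_last (by omega)] at hseq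
    rw [canonLabels_last]
    cases hseq
    rfl
  | succ d ih =>
    intro t ks ht hd hseq
    have ht1 : t + 1 < n := by omega
    rw [canonChain_cons ht1] at hseq
    obtain ⟨rest, hrest⟩ : ∃ rest, canonChain M (t+1) = Lp M (t+1) :: rest := by
      obtain ⟨-, hhd, -, -⟩ := canon_facts (M := M) (n - 1 - (t+1)) (t+1) (by omega) rfl
      cases h : canonChain M (t+1) with
      | nil => rw [h] at hhd; simp at hhd
      | cons a r => rw [h] at hhd; simp at hhd; exact ⟨r, by rw [hhd]⟩
    rw [hrest] at hseq
    cases hseq with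
    | cons hk hseq' =>
      rcases Dmain ht1 hk Lp_pt_M with ⟨hkeq, -⟩ | ⟨-, hne⟩
      · rw [canonLabels_cons ht1, hkeq]
        congr 1
        exact ih (t+1) _ (by omega) (by omega) (hrest ▸ hseq')
      · exact absurd rfl hne

theorem key {M : Fin n} :
    ∀ (c' : List (PtPartition n)) (t : ℕ) (ks' : List (ℕ × ℕ)), t < n →
      c'.Chain' PtCovBy → c'.head? = some (Lp M t) →
      c'.getLast? = some (Lp M (n-1)) → PtLabelSeq c' ks' →
      (c' = canonChain M t ∧ ks' = canonLabels M t) ∨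
        List.Lex (Prod.Lex (· < ·) (· < ·)) (canonLabels M t) ks' := by
  intro c'
  induction c' with
  | nil => intro t ks' ht hch hhd hlast hseq; simp at hhd
  | cons x c ih =>
    intro t ks' ht hch hhd hlast hseq
    simp only [List.head?_cons, Option.some.injEq] at hhd
    subst hhd
    cases c with
    | nil =>
      simp only [List.getLast?_singleton, Option.some.injEq] at hlast
      have hteq : t = n - 1 := by
        by_contra hne
        have ht1 : t + 1 < n := by omega
        have := congrArg PtPartition.sd hlast
        have h2 : (bigSd n t).r ⟨0, by omega⟩ ⟨t+1, ht1⟩ := by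
          rw [show (bigSd n t) = (Lp M t).sd from rfl, this]
          exact Or.inr ⟨by simp, by simp; omega⟩
        rcases h2 with he | ⟨-, h3⟩
        · rw [Fin.ext_iff] at he; simp at he
        · simp at h3
      subst hteq
      cases hseq
      rw [canonChain_last (by omega), canonLabels_last, hlast]
      exact Or.inl ⟨rfl, rfl⟩
    | cons y rest =>
      simp only [List.Chain', List.isChain_cons_cons] at hch
      have hlast' : (y :: rest).getLast? = some (Lp M (n-1)) := by
        rwa [List.getLast?_cons_cons] at hlast
      have hylew : PtLE y (Lp M (n-1)) := chain_end_le rest y _ hch.2 hlast'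
      have ht1 : t + 1 < n := by
        by_contra h
        have hteq : t = n - 1 := by omega
        have hxw : PtLT (Lp M (n-1)) y := hteq ▸ hch.1.1
        exact hxw.2 hylew
      cases hseq with
      | cons hk hseq' =>
        rename_i k ks
        have hyM : y.pt M = M := by
          have := hylew.2 M
          rwa [Lp_pt_M] at this
        rcases Dmain ht1 hk hyM with ⟨hkeq, hyeq⟩ | ⟨hlex, -⟩
        · subst hyeq
          rcases ih (t+1) ks (by omega) hch.2 (by simp) hlast' hseq' with ⟨h1, h2⟩ | h1
          · left
            rw [canonChain_cons ht1, canonLabels_cons ht1, h1, h2, hkeq]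
            exact ⟨rfl, rfl⟩
          · right
            rw [canonLabels_cons ht1, hkeq]
            exact List.Lex.cons h1
        · right
          rw [canonLabels_cons ht1]
          exact List.Lex.rel hlex


theorem prodlex_asymm {a b : ℕ × ℕ}
    (h1 : Prod.Lex (· < ·) (· < ·) a b) (h2 : Prod.Lex (· < ·) (· < ·) b a) : False := by
  cases h1 <;> cases h2 <;> omega

theorem listlex_asymm :
    ∀ {l1 l2 : List (ℕ × ℕ)}, List.Lex (Prod.Lex (· < ·) (· < ·)) l1 l2 →
      List.Lex (Prod.Lex (· < ·) (· < ·)) l2 l1 → False := by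
  intro l1
  induction l1 with
  | nil => intro l2 h1 h2; cases h1; cases h2
  | cons a l ihl =>
    intro l2 h1 h2
    cases h1 with
    | cons h =>
      cases h2 with
      | cons h' => exact ihl h h'
      | rel h' => exact prodlex_asymm h' h'
    | rel h =>
      cases h2 with
      | cons h' => exact prodlex_asymm h h
      | rel h' => exact prodlex_asymm h h'

theorem canonLabels_sorted {M : Fin n} (t : ℕ) :
    (canonLabels M t).Pairwise (Prod.Lex (· < ·) (· < ·)) := by
  unfold canonLabels
  rw [List.pairwise_map]
  refine List.Pairwise.imp ?_ (List.pairwise_lt_range' (s := t) (n := n - 1 - t))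
  intro a b hab
  have h1 : lab n M a = (a + 2, (lab n M a).2) := rfl
  have h2 : lab n M b = (b + 2, (lab n M b).2) := rfl
  rw [h1, h2]
  exact Prod.Lex.left _ _ (by omega)

theorem seq_nil_of_single {x : PtPartition n} {ks : List (ℕ × ℕ)}
    (h : PtLabelSeq [x] ks) : ks = [] := by
  cases h; rfl

theorem stmt6' (l₀ w : PtPartition n)
    (h0 : l₀.sd = ⊥) (hw : w.sd = ⊤) (hlw : PtLE l₀ w) :
    ∃! c : List (PtPartition n),
      PtSatChain l₀ w c ∧
      (∃ ks : List (ℕ × ℕ), PtLabelSeq c ks ∧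
        ks.Pairwise (Prod.Lex (· < ·) (· < ·))) ∧
      (∀ c' ks ks', PtSatChain l₀ w c' → PtLabelSeq c ks → PtLabelSeq c' ks' →
        ks = ks' ∨ List.Lex (Prod.Lex (· < ·) (· < ·)) ks ks') := by
  rcases Nat.eq_zero_or_pos n with hn | hn
  · -- n = 0
    subst hn
    have hl0w : l₀ = w := by
      refine PtPartition.ext' ?_ (funext fun x => x.elim0)
      apply Setoid.ext
      intro x
      exact x.elim0
    subst hl0w
    refine ⟨[l₀], ⟨⟨List.isChain_singleton _, rfl, rfl⟩,
      ⟨[], PtLabelSeq.single _, List.Pairwise.nil⟩, ?_⟩, ?_⟩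
    · intro c' ks ks' hsat hks hks'
      rw [seq_nil_of_single hks]
      cases ks' with
      | nil => exact Or.inl rfl
      | cons a l => exact Or.inr (List.Lex.nil)
    · rintro c'' ⟨hsat'', -, -⟩
      exact chain_self hsat''.1 hsat''.2.1 hsat''.2.2
  · -- n ≥ 1
    set M : Fin n := w.pt ⟨0, hn⟩ with hM
    have hwpt : ∀ x, w.pt x = M := by
      intro x
      exact w.pt_eq x ⟨0, hn⟩ (by rw [hw]; trivial)
    have hweq : w = Lp M (n-1) := by
      refine PtPartition.ext' ?_ (funext fun x => ?_)
      · rw [hw]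
        apply Setoid.ext
        intro x y
        constructor
        · intro _; exact Or.inr ⟨by omega, by omega⟩
        · intro _; trivial
      · rw [hwpt x]
        refine Fin.ext ?_
        rw [Lp_pt_le (by omega)]
        omega
    have hl0pt : ∀ x, l₀.pt x = x := by
      intro x
      have := l₀.pt_rel x
      rw [h0] at this
      exact this
    have hl0eq : l₀ = Lp M 0 := by
      refine PtPartition.ext' ?_ (funext fun x => ?_)
      · rw [h0]
        apply Setoid.ext
        intro x y
        constructor
        · intro h; exact Or.inl h
        · rintro (h | ⟨h1, h2⟩)
          · exact h
          · exact Fin.ext (by omega)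
      · rw [hl0pt x]
        by_cases hx : (x : ℕ) ≤ 0
        · refine Fin.ext ?_
          rw [Lp_pt_le hx]
          omega
        · rw [Lp_pt_gt (by omega)]
    obtain ⟨hch, hhd, hlast, hseq⟩ := canon_facts (M := M) (n - 1 - 0) 0 hn rfl
    refine ⟨canonChain M 0, ⟨⟨hch, by rw [hl0eq]; exact hhd, by rw [hweq]; exact hlast⟩,
      ⟨canonLabels M 0, hseq, canonLabels_sorted 0⟩, ?_⟩, ?_⟩
    · intro c' ks ks' hsat hks hks'
      have hks0 : ks = canonLabels M 0 :=
        labelseq_canon_unique (n - 1 - 0) 0 ks hn rfl hks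
      rcases key c' 0 ks' hn hsat.1 (by rw [hl0eq] at hsat; exact hsat.2.1)
          (by rw [hweq] at hsat; exact hsat.2.2) hks' with ⟨-, h2⟩ | h1
      · exact Or.inl (by rw [hks0, h2])
      · exact Or.inr (by rw [hks0]; exact h1)
    · rintro c'' ⟨hsat'', ⟨ks'', hks'', hsort''⟩, hmin''⟩
      rcases key c'' 0 ks'' hn hsat''.1 (by rw [hl0eq] at hsat''; exact hsat''.2.1)
          (by rw [hweq] at hsat''; exact hsat''.2.2) hks'' with ⟨h1, -⟩ | h1
      · exact h1
      · exfalso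
        rcases hmin'' (canonChain M 0) ks'' (canonLabels M 0)
            ⟨hch, by rw [hl0eq]; exact hhd, by rw [hweq]; exact hlast⟩ hks'' hseq with h2 | h2
        · rw [h2] at h1
          exact listlex_asymm h1 h1
        · exact listlex_asymm h1 h2

end Scratch


/-- The above labelling, with labels ordered lexicographically, is an
EL-labelling of every maximal interval of the pointed partition poset (from
the discrete pointed partition `l₀` to a maximal element `w`, which has a
single pointed block): there is a unique maximal chain with strictly
increasing label sequence, and its label sequence is lexicographically
least. -/
theorem stmt6 (n : ℕ) (l₀ w : PtPartition n)
    (h0 : l₀.sd = ⊥) (hw : w.sd = ⊤) (hlw : PtLE l₀ w) :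
    ∃! c : List (PtPartition n),
      PtSatChain l₀ w c ∧
      (∃ ks : List (ℕ × ℕ), PtLabelSeq c ks ∧
        ks.Pairwise (Prod.Lex (· < ·) (· < ·))) ∧
      (∀ c' ks ks', PtSatChain l₀ w c' → PtLabelSeq c ks → PtLabelSeq c' ks' →
        ks = ks' ∨ List.Lex (Prod.Lex (· < ·) (· < ·)) ks ks') := by
  exact Scratch.stmt6' l₀ w h0 hw hlw
end
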